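/- Let $m \geq 1$. Then $|T_{3^m}(A,B)| \leq 3^{1 + 3m/4} \gcd(3^m, A, B)^{1/4}$, where $T_{3^m}(A,B) = \sum_{n \bmod 3^m, 3 \nmid n} e((An^2 + B\bar n)/3^m)$. -/

import Mathlib

noncomputable def e (x : ℝ) : ℂ := Complex.exp (2 * Real.pi * Complex.I * x)

lemma e_add (x y : ℝ) : e (x + y) = e x * e y := by
  simp [e, ← Complex.exp_add]; ring_nf

lemma e_int (n : ℤ) : e n = 1 := by
  simp [e]
  rw [show 2 * (Real.pi:ℂ) * Complex.I * n = n * (2 * Real.pi * Complex.I) by ring]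
  exact Complex.exp_int_mul_two_pi_mul_I n

lemma e_abs (x : ℝ) : ‖e x‖ = 1 := by
  simp [e]
  rw [show 2 * (Real.pi:ℂ) * Complex.I * x = (2 * Real.pi * x : ℝ) * Complex.I by push_cast; ring]
  exact Complex.norm_exp_ofReal_mul_I _

lemma e_pow (x : ℝ) (n : ℕ) : e x ^ n = e (n * x) := by
  induction n with
  | zero => simp [e]
  | succ n ih => rw [pow_succ, ih, ← e_add]; push_cast; ring_nf

lemma e_eq_one_iff (x : ℝ) : e x = 1 ↔ ∃ n : ℤ, x = n := by
  constructor
  · intro h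
    rw [e, Complex.exp_eq_one_iff] at h
    obtain ⟨n, hn⟩ := h
    refine ⟨n, ?_⟩
    have hpi : (2 * (Real.pi:ℂ) * Complex.I) ≠ 0 := by
      have h1 : (Real.pi:ℂ) ≠ 0 := by exact_mod_cast Real.pi_ne_zero
      exact mul_ne_zero (mul_ne_zero two_ne_zero h1) Complex.I_ne_zero
    have h2 : (2*Real.pi*Complex.I) * (x:ℂ) = (2*Real.pi*Complex.I) * n := by
      linear_combination hn
    have := mul_left_cancel₀ hpi h2
    exact_mod_cast this
  · rintro ⟨n, rfl⟩; exact e_int n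

lemma e_congr {q : ℕ} (hq : q ≠ 0) {X Y : ℤ} (h : ((X : ZMod q)) = (Y : ZMod q)) :
    e ((X : ℝ) / q) = e ((Y : ℝ) / q) := by
  rw [ZMod.intCast_eq_intCast_iff] at h
  obtain ⟨c, hc⟩ := h.dvd
  have hq' : (q:ℝ) ≠ 0 := Nat.cast_ne_zero.mpr hq
  have hc' : Y = X + q * c := by linarith [hc]
  have : (Y:ℝ)/q = (X:ℝ)/q + (c:ℝ) := by
    rw [hc']; push_cast; field_simp
  rw [this, e_add, e_int, mul_one]

lemma geom_e (J : ℕ) (hJ : J ≠ 0) (g : ℤ) :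
    ∑ v ∈ Finset.range J, e ((v : ℝ) * (g : ℝ) / J) = if (J:ℤ) ∣ g then (J:ℂ) else 0 := by
  have hJ' : (J:ℝ) ≠ 0 := Nat.cast_ne_zero.mpr hJ
  have hterm : ∀ v : ℕ, e ((v : ℝ) * (g : ℝ) / J) = (e ((g:ℝ)/J)) ^ v := by
    intro v; rw [e_pow]; ring_nf
  simp_rw [hterm]
  by_cases hdvd : (J:ℤ) ∣ g
  · obtain ⟨c, rfl⟩ := hdvd
    have hb : e ((((J:ℤ) * c : ℤ) : ℝ)/J) = 1 := by
      rw [show (((J:ℤ) * c : ℤ) : ℝ)/J = ((c:ℤ):ℝ) by push_cast; field_simp]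
      exact e_int c
    simp only [hb, one_pow]
    rw [if_pos ⟨c, rfl⟩]
    simp
  · have hz : e ((g:ℝ)/J) ≠ 1 := by
      intro h
      obtain ⟨n, hn⟩ := (e_eq_one_iff _).mp h
      apply hdvd
      refine ⟨n, ?_⟩
      have : (g:ℝ) = J * n := by field_simp at hn; linarith [hn]
      exact_mod_cast this
    rw [geom_sum_eq hz]
    have : e ((g:ℝ)/J) ^ J = 1 := by
      rw [e_pow]
      have : (J:ℝ) * ((g:ℝ)/J) = (g:ℤ) := by field_simp
      rw [this, e_int]
    simp [this, if_neg hdvd]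


lemma cube_cong (j : ℕ) (u u' : ℤ) (hu : ¬ (3:ℤ) ∣ u) (hu' : ¬ (3:ℤ) ∣ u')
    (h : (3:ℤ)^j ∣ u^3 - u'^3) : (3:ℤ)^(j-1) ∣ u - u' := by
  have hp : Prime (3:ℤ) := Int.prime_three
  by_cases h3 : (3:ℤ) ∣ u - u'
  · obtain ⟨e', he⟩ := h3
    have hfact2 : u^3 - u'^3 = 9*e' * (3*e'^2 + u*u') := by
      linear_combination (u^2+u*u'+u'^2 + 3*e'*(u-u'-3*e') + 18*e'^2) * he
    have hunit : ¬ (3:ℤ) ∣ (3*e'^2 + u*u') := by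
      intro hcon
      have huu : (3:ℤ) ∣ u*u' := by
        have := dvd_sub hcon (⟨e'^2, rfl⟩ : (3:ℤ) ∣ 3*e'^2)
        simpa using this
      rcases hp.dvd_mul.mp huu with h' | h'
      · exact hu h'
      · exact hu' h'
    have hcop : IsCoprime ((3:ℤ)^j) (3*e'^2 + u*u') :=
      ((hp.coprime_iff_not_dvd).mpr hunit).pow_left
    have hdvd9 : (3:ℤ)^j ∣ 9*e' := hcop.dvd_of_dvd_mul_right (hfact2 ▸ h)
    rcases Nat.eq_zero_or_pos j with hj | hj
    · simp [hj]
    · have h9 : (9:ℤ)*e' = 3*(3*e') := by ring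
      have h3j : (3:ℤ)^j = 3*3^(j-1) := by
        rw [← pow_succ']
        congr 1
        omega
      rw [he]
      rw [h9, h3j] at hdvd9
      exact (mul_dvd_mul_iff_left (by norm_num : (3:ℤ) ≠ 0)).mp hdvd9
  · have hfact : u^3 - u'^3 = (u-u') * ((u-u')^2 + 3*(u*u')) := by ring
    have hunit : ¬ (3:ℤ) ∣ ((u-u')^2 + 3*(u*u')) := by
      intro hcon
      have : (3:ℤ) ∣ (u-u')^2 := by
        have := dvd_sub hcon (⟨u*u', rfl⟩ : (3:ℤ) ∣ 3*(u*u'))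
        simpa using this
      exact h3 (hp.dvd_of_dvd_pow this)
    have hcop : IsCoprime ((3:ℤ)^j) ((u-u')^2 + 3*(u*u')) :=
      ((hp.coprime_iff_not_dvd).mpr hunit).pow_left
    have : (3:ℤ)^j ∣ u - u' := hcop.dvd_of_dvd_mul_right (hfact ▸ h)
    exact dvd_trans (pow_dvd_pow 3 (Nat.sub_le j 1)) this


lemma card_le_of_mod_eq {D t : ℕ} (hD : 0 < D) (S : Finset ℕ) (hS : S ⊆ Finset.range (D * t))
    (h : ∀ a ∈ S, ∀ b ∈ S, a % D = b % D) : S.card ≤ t := by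
  have := Finset.card_le_card_of_injOn (f := fun a => a / D) (t := Finset.range t)
    (fun a ha => Finset.mem_range.mpr (Nat.div_lt_of_lt_mul (by
      have := Finset.mem_range.mp (hS ha); omega)))
    (fun a ha b hb hab => by
      have h1 := h a ha b hb
      simp only at hab
      conv_lhs => rw [← Nat.div_add_mod a D]
      rw [hab, h1, Nat.div_add_mod])
  simpa using this

lemma key (q L J : ℕ) (hq : q = L * J) (hq0 : q ≠ 0) (A B : ℤ)
    (hLA : (q:ℤ) ∣ (L:ℤ)^2 * A) (hLB : (q:ℤ) ∣ (L:ℤ)^2 * B)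
    (u v : ℕ) (hu : Nat.Coprime u q) (huv : Nat.Coprime (u + L*v) q) :
    e (((A * ((u + L*v : ℕ) : ℤ)^2 + B * ((((u + L*v : ℕ) : ZMod q))⁻¹.val : ℤ) : ℤ) : ℝ) / q)
    = e (((A * (u:ℤ)^2 + B * (((u : ZMod q))⁻¹.val : ℤ) : ℤ) : ℝ) / q)
      * e ((((v : ℤ) * (2*A*u - B*(((u : ZMod q))⁻¹.val : ℤ)^2) : ℤ) : ℝ) / J) := by
  haveI : NeZero q := ⟨hq0⟩
  have hL0 : L ≠ 0 := by rintro rfl; simp at hq; exact hq0 hq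
  have hJ0 : J ≠ 0 := by rintro rfl; simp at hq; exact hq0 hq
  set U : ℤ := (((u : ZMod q))⁻¹.val : ℤ) with hU
  set N : ℤ := ((((u + L*v : ℕ) : ZMod q))⁻¹.val : ℤ) with hN
  have step1 : e (((A * ((u + L*v : ℕ) : ℤ)^2 + B * N : ℤ) : ℝ) / q)
      = e (((A * (u:ℤ)^2 + B * U + (L:ℤ)*v*(2*A*u - B*U^2) : ℤ) : ℝ) / q) := by
    apply e_congr hq0
    push_cast [hU, hN, ZMod.natCast_val, ZMod.cast_id]
    set uu : ZMod q := (u : ZMod q)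
    set Ub : ZMod q := uu⁻¹
    set w : ZMod q := ((u : ZMod q) + (L:ZMod q)*(v:ZMod q))⁻¹ with hw
    have hx : ((u : ZMod q) + (L:ZMod q)*(v:ZMod q)) = ((u + L*v : ℕ) : ZMod q) := by push_cast; ring
    have e1 : (uu + (L:ZMod q)*v) * w = 1 := by
      rw [hw, hx]; exact ZMod.coe_mul_inv_eq_one _ huv
    have e2 : uu * Ub = 1 := ZMod.coe_mul_inv_eq_one _ hu
    have hLA0 : (L:ZMod q)^2 * (A : ZMod q) = 0 := by
      have : (((L:ℤ)^2 * A : ℤ) : ZMod q) = 0 := (ZMod.intCast_zmod_eq_zero_iff_dvd _ q).mpr hLA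
      push_cast at this; exact this
    have hLB0 : (L:ZMod q)^2 * (B : ZMod q) = 0 := by
      have : (((L:ℤ)^2 * B : ℤ) : ZMod q) = 0 := (ZMod.intCast_zmod_eq_zero_iff_dvd _ q).mpr hLB
      push_cast at this; exact this
    have hBw : (B:ZMod q)*w = B*Ub - B*(L:ZMod q)*v*Ub^2 := by
      linear_combination ((B:ZMod q)*Ub - B*(L:ZMod q)*v*Ub^2)*e1
        + ((B:ZMod q)*(L:ZMod q)*v*Ub*w - B*w)*e2 + w*Ub^2*(v:ZMod q)^2*hLB0
    linear_combination (v:ZMod q)^2*hLA0 + hBw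
  rw [step1]
  have hLr : (L:ℝ) ≠ 0 := Nat.cast_ne_zero.mpr hL0
  have hJr : (J:ℝ) ≠ 0 := Nat.cast_ne_zero.mpr hJ0
  have hsplit : ((A*(u:ℤ)^2 + B*U + (L:ℤ)*v*(2*A*u - B*U^2) : ℤ):ℝ)/q
      = ((A*(u:ℤ)^2 + B*U : ℤ):ℝ)/q + (((v:ℤ)*(2*A*u - B*U^2) : ℤ):ℝ)/J := by
    rw [hq]; push_cast; field_simp
  rw [hsplit, e_add]


noncomputable def T (q : ℕ) (A B : ℤ) : ℂ :=
  ∑ n ∈ (Finset.range q).filter (fun n => Nat.Coprime n q),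
    e (((A * (n : ℤ) ^ 2 + B * (((n : ZMod q))⁻¹.val : ℤ) : ℤ) : ℝ) / (q : ℝ))

lemma final_bound (m k t : ℕ) (h : 4*t ≤ 4 + 3*m + k) :
    ((3:ℝ)^t) ≤ (3:ℝ) ^ (1 + 3*(m:ℝ)/4) * (((3^k : ℕ)) : ℝ)^((1:ℝ)/4) := by
  have h3 : ((3^k : ℕ) : ℝ) = (3:ℝ)^(k:ℕ) := by push_cast; ring
  rw [h3, ← Real.rpow_natCast 3 k, ← Real.rpow_natCast 3 t,
    ← Real.rpow_mul (by norm_num : (0:ℝ) ≤ 3), ← Real.rpow_add (by norm_num : (0:ℝ) < 3)]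
  apply Real.rpow_le_rpow_of_exponent_le (by norm_num)
  have : (t:ℝ) ≤ 1 + 3*m/4 + k/4 := by
    have := (Nat.cast_le (α := ℝ)).mpr h
    push_cast at this ⊢
    linarith
  linarith

lemma coprime_iff_not_dvd' (n m : ℕ) (hm : 1 ≤ m) : Nat.Coprime n (3^m) ↔ ¬ 3 ∣ n := by
  rw [Nat.coprime_comm]
  constructor
  · intro h hd
    have h3 : (3:ℕ) ∣ Nat.gcd (3^m) n := Nat.dvd_gcd (dvd_pow_self 3 (by omega)) hd
    rw [Nat.Coprime] at h
    rw [h] at h3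
    omega
  · intro h
    exact (Nat.Prime.coprime_iff_not_dvd Nat.prime_three |>.mpr h).pow_left _

theorem stmt5 (m : ℕ) (hm : 1 ≤ m) (A B : ℤ) :
    ‖T (3 ^ m) A B‖ ≤
      (3 : ℝ) ^ (1 + 3 * (m : ℝ) / 4) * (Nat.gcd (3 ^ m) (Int.gcd A B) : ℝ) ^ ((1 : ℝ) / 4) := by
  obtain ⟨k, hkm, hgcd⟩ : ∃ k ≤ m, Nat.gcd (3^m) (Int.gcd A B) = 3^k :=
    (Nat.dvd_prime_pow Nat.prime_three).mp (Nat.gcd_dvd_left _ _)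
  rw [hgcd]
  have hq0 : (3:ℕ)^m ≠ 0 := by positivity
  -- trivial bound on T by number of terms
  have htriv : ‖T (3^m) A B‖ ≤ ((Finset.range (3^m)).filter (fun n => Nat.Coprime n (3^m))).card := by
    refine le_trans (norm_sum_le _ _) ?_
    simp [e_abs]
  have hA3 : (3:ℤ)^k ∣ A := by
    have h1 : (3:ℕ)^k ∣ Int.gcd A B := hgcd ▸ Nat.gcd_dvd_right _ _
    have h2 := Int.natCast_dvd_natCast.mpr h1
    push_cast at h2
    exact h2.trans (Int.gcd_dvd_left _ _)
  have hB3 : (3:ℤ)^k ∣ B := by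
    have h1 : (3:ℕ)^k ∣ Int.gcd A B := hgcd ▸ Nat.gcd_dvd_right _ _
    have h2 := Int.natCast_dvd_natCast.mpr h1
    push_cast at h2
    exact h2.trans (Int.gcd_dvd_right _ _)
  obtain ⟨A', hA'⟩ := hA3
  obtain ⟨B', hB'⟩ := hB3
  by_cases hcase : m ≤ k + 1
  · -- trivial case
    refine le_trans htriv (le_trans ?_ (final_bound m k m (by omega)))
    calc (((Finset.range (3^m)).filter (fun n => Nat.Coprime n (3^m))).card : ℝ)
        ≤ ((Finset.range (3^m)).card : ℝ) := by exact_mod_cast Finset.card_filter_le _ _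
      _ = (3:ℝ)^m := by simp
  · -- main case
    push_neg at hcase
    have hkm2 : k + 2 ≤ m := hcase
    set j₀ := (m - k) / 2 with hj₀def
    set l := m - k - j₀ with hldef
    set jj := m - l with hjjdef
    have hj₀1 : 1 ≤ j₀ := by omega
    have hl1 : 1 ≤ l := by omega
    have hjj1 : 1 ≤ jj := by omega
    have hlj : l + jj = m := by omega
    have hjkj : jj = k + j₀ := by omega
    have h2lk : m ≤ 2*l + k := by omega
    have hj₀l : j₀ ≤ l := by omega
    have hj₀m : j₀ ≤ m := by omega
    set L := (3:ℕ)^l with hLdef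
    set J := (3:ℕ)^jj with hJdef
    have hLpos : 0 < L := by positivity
    have hJpos : 0 < J := by positivity
    have hJ0 : J ≠ 0 := by positivity
    have hqLJ : (3:ℕ)^m = L * J := by rw [hLdef, hJdef, ← pow_add, hlj]
    have h3L : 3 ∣ L := by rw [hLdef]; exact dvd_pow_self 3 (by omega)
    have hLz : (L:ℤ) = (3:ℤ)^l := by rw [hLdef]; push_cast; ring
    have hJz : (J:ℤ) = (3:ℤ)^jj := by rw [hJdef]; push_cast; ring
    have hqz : (((3:ℕ)^m):ℤ) = (3:ℤ)^m := by push_cast; ring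
    have hLA : (((3:ℕ)^m):ℤ) ∣ (L:ℤ)^2 * A := by
      rw [hLz, hqz, hA', ← pow_mul,
        show (3:ℤ)^(l*2) * ((3:ℤ)^k*A') = 3^(l*2+k)*A' from by rw [pow_add]; ring]
      exact Dvd.dvd.mul_right (pow_dvd_pow 3 (by omega)) A'
    have hLB : (((3:ℕ)^m):ℤ) ∣ (L:ℤ)^2 * B := by
      rw [hLz, hqz, hB', ← pow_mul,
        show (3:ℤ)^(l*2) * ((3:ℤ)^k*B') = 3^(l*2+k)*B' from by rw [pow_add]; ring]
      exact Dvd.dvd.mul_right (pow_dvd_pow 3 (by omega)) B'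
    have hcop3 : ∀ n : ℕ, Nat.Coprime n (3^m) ↔ ¬ 3 ∣ n := fun n => coprime_iff_not_dvd' n m hm
    -- step A : reindex
    have hstepA : T (3^m) A B =
        ∑ u ∈ (Finset.range L).filter (fun u => ¬ 3 ∣ u), ∑ v ∈ Finset.range J,
          e (((A * ((u + L*v : ℕ) : ℤ)^2 + B * ((((u + L*v : ℕ) : ZMod (3^m)))⁻¹.val : ℤ) : ℤ) : ℝ) / ((3^m : ℕ) : ℝ)) := by
      rw [T, ← Finset.sum_product']
      apply Finset.sum_nbij' (i := fun n => (n % L, n / L)) (j := fun p => p.1 + L * p.2)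
      · intro n hn
        obtain ⟨hn1, hn2⟩ := Finset.mem_filter.mp hn
        have hn3 : ¬ 3 ∣ n := (hcop3 n).mp hn2
        have hnlt := Finset.mem_range.mp hn1
        refine Finset.mem_product.mpr ⟨Finset.mem_filter.mpr ⟨Finset.mem_range.mpr (Nat.mod_lt _ hLpos), ?_⟩, Finset.mem_range.mpr ?_⟩
        · intro hd
          apply hn3
          rw [← Nat.mod_add_div n L]
          exact Nat.dvd_add hd (h3L.mul_right _)
        · have : n < L * J := by rw [← hqLJ]; exact hnlt
          exact Nat.div_lt_of_lt_mul (by omega)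
      · intro p hp
        obtain ⟨hp1, hp2⟩ := Finset.mem_product.mp hp
        obtain ⟨hp3, hp4⟩ := Finset.mem_filter.mp hp1
        have hu := Finset.mem_range.mp hp3
        have hv := Finset.mem_range.mp hp2
        refine Finset.mem_filter.mpr ⟨Finset.mem_range.mpr ?_, (hcop3 _).mpr ?_⟩
        · rw [hqLJ]; nlinarith
        · intro hd
          apply hp4
          have h5 := Nat.dvd_sub hd (h3L.mul_right p.2)
          rwa [Nat.add_sub_cancel] at h5
      · intro n _; exact Nat.mod_add_div n L
      · intro p hp
        obtain ⟨hp1, hp2⟩ := Finset.mem_product.mp hp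
        obtain ⟨hp3, _⟩ := Finset.mem_filter.mp hp1
        have hu := Finset.mem_range.mp hp3
        have h1 : (p.1 + L * p.2) % L = p.1 := by
          rw [Nat.add_mul_mod_self_left, Nat.mod_eq_of_lt hu]
        have h2 : (p.1 + L * p.2) / L = p.2 := by
          rw [Nat.add_mul_div_left _ _ hLpos, Nat.div_eq_of_lt hu, zero_add]
        simp [h1, h2]
      · intro n _
        rw [Nat.mod_add_div n L]
    -- inner sum evaluation
    have hstepC : ∀ u ∈ (Finset.range L).filter (fun u => ¬ 3 ∣ u),
        (∑ v ∈ Finset.range J,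
          e (((A * ((u + L*v : ℕ) : ℤ)^2 + B * ((((u + L*v : ℕ) : ZMod (3^m)))⁻¹.val : ℤ) : ℤ) : ℝ) / ((3^m : ℕ) : ℝ)))
        = e (((A * (u:ℤ)^2 + B * (((u : ZMod (3^m)))⁻¹.val : ℤ) : ℤ) : ℝ) / ((3^m : ℕ) : ℝ))
          * (if ((J:ℤ)) ∣ (2*A*u - B*(((u : ZMod (3^m)))⁻¹.val : ℤ)^2) then (J:ℂ) else 0) := by
      intro u hu
      obtain ⟨hu1, hu2⟩ := Finset.mem_filter.mp hu
      have hcu : Nat.Coprime u (3^m) := (hcop3 u).mpr hu2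
      have hkey : ∀ v ∈ Finset.range J,
          e (((A * ((u + L*v : ℕ) : ℤ)^2 + B * ((((u + L*v : ℕ) : ZMod (3^m)))⁻¹.val : ℤ) : ℤ) : ℝ) / ((3^m : ℕ) : ℝ))
          = e (((A * (u:ℤ)^2 + B * (((u : ZMod (3^m)))⁻¹.val : ℤ) : ℤ) : ℝ) / ((3^m : ℕ) : ℝ))
            * e ((((v : ℤ) * (2*A*u - B*(((u : ZMod (3^m)))⁻¹.val : ℤ)^2) : ℤ) : ℝ) / (J : ℝ)) := by
        intro v _
        refine key (3^m) L J hqLJ hq0 A B (by exact_mod_cast hLA) (by exact_mod_cast hLB) u v hcu ?_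
        refine (hcop3 _).mpr ?_
        intro hd
        apply hu2
        have h5 := Nat.dvd_sub hd (h3L.mul_right v)
        rwa [Nat.add_sub_cancel] at h5
      rw [Finset.sum_congr rfl hkey, ← Finset.mul_sum]
      congr 1
      have hcast : ∀ v : ℕ, ((((v : ℤ) * (2*A*u - B*(((u : ZMod (3^m)))⁻¹.val : ℤ)^2) : ℤ) : ℝ) / (J : ℝ))
          = (v:ℝ) * (((2*A*u - B*(((u : ZMod (3^m)))⁻¹.val : ℤ)^2 : ℤ)):ℝ) / (J:ℝ) := by
        intro v; push_cast; ring
      simp_rw [hcast]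
      exact geom_e J hJ0 _
    -- absolute value bound
    set C : Finset ℕ := ((Finset.range L).filter (fun u => ¬ 3 ∣ u)).filter
        (fun u => (J:ℤ) ∣ (2*A*u - B*(((u : ZMod (3^m)))⁻¹.val : ℤ)^2)) with hCdef
    have habs : ‖T (3^m) A B‖ ≤ (J:ℝ) * (C.card : ℝ) := by
      rw [hstepA, Finset.sum_congr rfl hstepC]
      refine le_trans (norm_sum_le _ _) ?_
      have habs1 : ∀ u ∈ (Finset.range L).filter (fun u => ¬ 3 ∣ u),
          ‖e (((A * (u:ℤ)^2 + B * (((u : ZMod (3^m)))⁻¹.val : ℤ) : ℤ) : ℝ) / ((3^m : ℕ) : ℝ))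
            * (if ((J:ℤ)) ∣ (2*A*u - B*(((u : ZMod (3^m)))⁻¹.val : ℤ)^2) then (J:ℂ) else 0)‖
          = (if ((J:ℤ)) ∣ (2*A*u - B*(((u : ZMod (3^m)))⁻¹.val : ℤ)^2) then (J:ℝ) else 0) := by
        intro u _
        rw [norm_mul, e_abs, one_mul]
        split_ifs
        · exact Complex.norm_natCast J
        · simp
      rw [Finset.sum_congr rfl habs1, ← Finset.sum_filter, ← hCdef, Finset.sum_const, nsmul_eq_mul]
      rw [mul_comm]
    -- counting
    have hCsub : ∀ u ∈ C, ¬ (3:ℤ) ∣ (u:ℤ) ∧ (3:ℤ)^j₀ ∣ 2*A'*(u:ℤ)^3 - B' := by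
      intro u huC
      obtain ⟨hu1, hdvd⟩ := Finset.mem_filter.mp huC
      obtain ⟨_, hu3⟩ := Finset.mem_filter.mp hu1
      have hu3' : ¬ (3:ℤ) ∣ (u:ℤ) := by
        intro hcon
        exact hu3 (by exact_mod_cast hcon)
      refine ⟨hu3', ?_⟩
      set Uu : ℤ := (((u : ZMod (3^m)))⁻¹.val : ℤ) with hUu
      have hcu : Nat.Coprime u (3^m) := (hcop3 u).mpr hu3
      have hgu : 2*A*(u:ℤ) - B*Uu^2 = 3^k * (2*A'*u - B'*Uu^2) := by
        rw [hA', hB']; ring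
      have hd2 : (3:ℤ)^(k+j₀) ∣ 3^k * (2*A'*u - B'*Uu^2) := by
        rw [← hgu, ← hjkj, ← hJz]; exact hdvd
      rw [pow_add] at hd2
      have hd3 : (3:ℤ)^j₀ ∣ 2*A'*(u:ℤ) - B'*Uu^2 :=
        (mul_dvd_mul_iff_left (by positivity : (3:ℤ)^k ≠ 0)).mp hd2
      have huU : (3:ℤ)^m ∣ (u:ℤ)*Uu - 1 := by
        have h := ZMod.coe_mul_inv_eq_one u hcu
        have h0 : (((u:ℤ)*Uu - 1 : ℤ) : ZMod (3^m)) = 0 := by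
          push_cast [hUu, ZMod.natCast_val, ZMod.cast_id]
          rw [sub_eq_zero]
          exact_mod_cast h
        exact_mod_cast (ZMod.intCast_zmod_eq_zero_iff_dvd _ _).mp h0
      have h3j0q : (3:ℤ)^j₀ ∣ (3:ℤ)^m := pow_dvd_pow 3 hj₀m
      have heq2 : 2*A'*(u:ℤ)^3 - B' = (u:ℤ)^2*(2*A'*u - B'*Uu^2) + B'*(((u:ℤ)*Uu - 1)*((u:ℤ)*Uu + 1)) := by
        ring
      rw [heq2]
      exact dvd_add (Dvd.dvd.mul_left hd3 _)
        (Dvd.dvd.mul_left (Dvd.dvd.mul_right (h3j0q.trans huU) _) _)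
    have hcard : (C.card : ℝ) ≤ ((3:ℕ)^(l - j₀ + 1) : ℕ) := by
      by_cases h3A' : (3:ℤ) ∣ A'
      · -- no solutions
        have h3B' : ¬ (3:ℤ) ∣ B' := by
          intro h3B
          have hdA : ((3:ℕ)^(k+1) : ℤ) ∣ A := by
            push_cast
            rw [hA', pow_succ]
            exact mul_dvd_mul_left _ h3A'
          have hdB : ((3:ℕ)^(k+1) : ℤ) ∣ B := by
            push_cast
            rw [hB', pow_succ]
            exact mul_dvd_mul_left _ h3B
          have hdg : ((3:ℕ)^(k+1) : ℤ) ∣ (Int.gcd A B : ℤ) := Int.dvd_coe_gcd hdA hdB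
          have hdg' : (3:ℕ)^(k+1) ∣ Int.gcd A B := by exact_mod_cast hdg
          have hdgg : (3:ℕ)^(k+1) ∣ Nat.gcd (3^m) (Int.gcd A B) :=
            Nat.dvd_gcd (pow_dvd_pow 3 (by omega)) hdg'
          rw [hgcd] at hdgg
          have := (Nat.pow_dvd_pow_iff_le_right (by norm_num : 1 < 3)).mp hdgg
          omega
        have hCempty : C = ∅ := by
          rw [Finset.eq_empty_iff_forall_notMem]
          intro u huC
          obtain ⟨_, hsol⟩ := hCsub u huC
          have h31 : (3:ℤ) ∣ 2*A'*(u:ℤ)^3 - B' := dvd_trans (dvd_pow_self 3 (by omega)) hsol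
          have h32 : (3:ℤ) ∣ 2*A'*(u:ℤ)^3 := (h3A'.mul_left 2).mul_right _
          apply h3B'
          have hBeq : B' = 2*A'*(u:ℤ)^3 - (2*A'*(u:ℤ)^3 - B') := by ring
          rw [hBeq]
          exact dvd_sub h32 h31
        rw [hCempty]
        simp
      · -- all solutions in one class mod 3^(j₀-1)
        have h2A' : ¬ (3:ℤ) ∣ 2*A' := by
          intro hcon
          rcases (Int.prime_three.dvd_mul).mp hcon with h' | h'
          · norm_num at h'
          · exact h3A' h'
        have hcong : ∀ a ∈ C, ∀ b ∈ C, a % (3^(j₀-1)) = b % (3^(j₀-1)) := by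
          intro a ha b hb
          obtain ⟨ha3, hasol⟩ := hCsub a ha
          obtain ⟨hb3, hbsol⟩ := hCsub b hb
          have hdiff : (3:ℤ)^j₀ ∣ 2*A'*((a:ℤ)^3 - (b:ℤ)^3) := by
            have := dvd_sub hasol hbsol
            have heq3 : 2*A'*((a:ℤ)^3 - (b:ℤ)^3) = (2*A'*(a:ℤ)^3 - B') - (2*A'*(b:ℤ)^3 - B') := by ring
            rw [heq3]; exact this
          have hcop2 : IsCoprime ((3:ℤ)^j₀) (2*A') :=
            ((Int.prime_three.coprime_iff_not_dvd).mpr h2A').pow_left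
          have hcube : (3:ℤ)^j₀ ∣ (a:ℤ)^3 - (b:ℤ)^3 := hcop2.dvd_of_dvd_mul_left hdiff
          have := cube_cong j₀ (a:ℤ) (b:ℤ) ha3 hb3 hcube
          have h' : (3:ℤ)^(j₀-1) ∣ (b:ℤ) - a := by
            have h'' := dvd_neg.mpr this
            rwa [neg_sub] at h''
          have hmod : (a:ℕ) ≡ b [MOD 3^(j₀-1)] := by
            rw [Nat.modEq_iff_dvd]
            exact_mod_cast h'
          exact hmod
        have hsubC : C ⊆ Finset.range (3^(j₀-1) * 3^(l - j₀ + 1)) := by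
          intro u huC
          obtain ⟨hu1, _⟩ := Finset.mem_filter.mp huC
          obtain ⟨hu2, _⟩ := Finset.mem_filter.mp hu1
          rw [← pow_add]
          have : j₀ - 1 + (l - j₀ + 1) = l := by omega
          rw [this]
          exact hu2
        exact_mod_cast card_le_of_mod_eq (by positivity) C hsubC hcong
    -- conclusion
    have hfinal : (J:ℝ) * ((3:ℕ)^(l - j₀ + 1) : ℕ) = (3:ℝ)^(m + 1 - j₀) := by
      rw [hJdef]
      push_cast
      rw [← pow_add]
      congr 1
      omega
    calc ‖T (3^m) A B‖ ≤ (J:ℝ) * (C.card : ℝ) := habs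
      _ ≤ (J:ℝ) * ((3:ℕ)^(l - j₀ + 1) : ℕ) := by
          apply mul_le_mul_of_nonneg_left hcard (by positivity)
      _ = (3:ℝ)^(m + 1 - j₀) := hfinal
      _ ≤ _ := final_bound m k (m + 1 - j₀) (by omega)
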